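/- Let P = {s, s+d, ..., s+ℓd} be an arithmetic progression and let A = {a, a+g} with d | g and 1 ≤ g ≤ ℓd. Then for every positive integer h, the arithmetic progression {s+ha, s+ha+d, ..., s+ha+(ℓ + hg/d)d} is contained in P + hA. -/
import Mathlib


open Pointwise

/-- Greedy sumset: sums a + b where b fits strictly below the gap to the next element of A. -/
def greedySum (A B : Set ℤ) : Set ℤ :=
  {z | ∃ a ∈ A, ∃ b ∈ B, 0 ≤ b ∧ z = a + b ∧ ∀ a' ∈ A, a' ≤ a + b → a' ≤ a}

/-- Density of a set of integers over the interval [1, z]. -/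
noncomputable def dens (z : ℕ) (S : Set ℤ) : ℝ :=
  sInf {r : ℝ | ∃ z' : ℕ, 1 ≤ z' ∧ z' ≤ z ∧ r = (S ∩ Set.Icc 1 (z' : ℤ)).ncard / z'}

/-- k-fold greedy sumset. -/
def kGreedy : ℕ → Set ℤ → Set ℤ
  | 0, _ => {0}
  | k + 1, A => greedySum A (kGreedy k A)

/-- k-fold sumset. -/
def kFold : ℕ → Set ℤ → Set ℤ
  | 0, _ => {0}
  | k + 1, A => A + kFold k A

lemma kFold_mem (a g : ℤ) : ∀ h m : ℕ, m ≤ h →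
    (h : ℤ) * a + (m : ℤ) * g ∈ kFold h ({a, a + g} : Set ℤ) := by
  intro h
  induction h with
  | zero => intro m hm; interval_cases m; simp [kFold]
  | succ n ih =>
    intro m hm
    match m with
    | 0 =>
      refine Set.mem_add.mpr ⟨a, by simp, (n : ℤ) * a + ((0 : ℕ) : ℤ) * g,
        ih 0 (Nat.zero_le _), by push_cast; ring⟩
    | Nat.succ m' =>
      refine Set.mem_add.mpr ⟨a + g, by simp, (n : ℤ) * a + (m' : ℤ) * g,
        ih m' (by omega), by push_cast; ring⟩

theorem stmt9 (s d a g : ℤ) (ℓ : ℤ) (hℓ : 0 ≤ ℓ) (hdvd : d ∣ g) (hg1 : 1 ≤ g)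
    (hg2 : g ≤ ℓ * d) (h : ℕ) (hh : 1 ≤ h) :
    ∀ j : ℤ, 0 ≤ j → j ≤ ℓ + (h : ℤ) * (g / d) →
      s + (h : ℤ) * a + j * d ∈
        {x : ℤ | ∃ i : ℤ, 0 ≤ i ∧ i ≤ ℓ ∧ x = s + i * d} + kFold h ({a, a + g} : Set ℤ) := by
  intro j hj0 hj1
  set q : ℤ := g / d with hq
  have hd : 0 < d := by
    by_contra hd
    push_neg at hd
    have : ℓ * d ≤ 0 := mul_nonpos_of_nonneg_of_nonpos hℓ hd
    linarith
  have hgq : d * q = g := Int.mul_ediv_cancel' hdvd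
  have hq1 : 1 ≤ q := by nlinarith
  have hqpos : 0 < q := by linarith
  have hqℓ : q ≤ ℓ := by
    have : q * d ≤ ℓ * d := by nlinarith
    exact le_of_mul_le_mul_right this hd
  set m : ℤ := min (h : ℤ) (j / q) with hm
  have hjq0 : 0 ≤ j / q := Int.ediv_nonneg hj0 hqpos.le
  have hm0 : 0 ≤ m := le_min (by positivity) hjq0
  have hmh : m ≤ (h : ℤ) := min_le_left _ _
  have hmod0 : 0 ≤ j % q := Int.emod_nonneg j hqpos.ne'
  have hmodlt : j % q < q := Int.emod_lt_of_pos j hqpos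
  have hdiv : q * (j / q) + j % q = j := Int.mul_ediv_add_emod j q
  set i : ℤ := j - m * q with hi
  have hi0 : 0 ≤ i := by
    have h1 : m * q ≤ (j / q) * q :=
      mul_le_mul_of_nonneg_right (min_le_right _ _) hqpos.le
    have h2 : (j / q) * q ≤ j := by linarith [hdiv]
    simp only [hi]; linarith
  have hiℓ : i ≤ ℓ := by
    rcases le_or_gt (j / q) (h : ℤ) with hc | hc
    · have hme : m = j / q := min_eq_right hc
      have : i = j % q := by rw [hi, hme]; linarith [hdiv]
      linarith [this]
    · have hme : m = (h : ℤ) := min_eq_left hc.le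
      rw [hi, hme]; linarith
  -- express m as a natural number
  clear_value i m
  obtain ⟨mn, rfl⟩ : ∃ mn : ℕ, (mn : ℤ) = m := ⟨m.toNat, Int.toNat_of_nonneg hm0⟩
  have hmn : mn ≤ h := by exact_mod_cast hmh
  refine Set.mem_add.mpr ⟨s + i * d, ⟨i, hi0, hiℓ, rfl⟩,
    (h : ℤ) * a + (mn : ℤ) * g, kFold_mem a g h mn hmn, ?_⟩
  have : (mn : ℤ) * g = (mn : ℤ) * q * d := by rw [← hgq]; ring
  rw [this]
  have hij : i + (mn : ℤ) * q = j := by rw [hi]; ring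
  nlinarith [hij]
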